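/- Let A be an m×n real matrix and let A⁺ be its Moore–Penrose pseudoinverse. Then (AᵀA + εI)⁻¹Aᵀ tends to A⁺ as ε → 0⁺; here for every ε > 0 the matrix AᵀA + εI is invertible, and the limit holds even when AᵀA is not invertible. -/

import Mathlib

open Matrix Filter

/-- `Ap` is the Moore–Penrose pseudoinverse of `A`. -/
def IsMoorePenrose {m n : ℕ} (A : Matrix (Fin m) (Fin n) ℝ)
    (Ap : Matrix (Fin n) (Fin m) ℝ) : Prop :=
  A * Ap * A = A ∧ Ap * A * Ap = Ap ∧ (A * Ap)ᵀ = A * Ap ∧ (Ap * A)ᵀ = Ap * A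

/-- Quadratic-form evaluation at a pair of basis vectors. -/
lemma quad_single {n : ℕ} (N : Matrix (Fin n) (Fin n) ℝ) (i j : Fin n) (a b : ℝ) :
    (Pi.single i a + Pi.single j b) ⬝ᵥ (N *ᵥ (Pi.single i a + Pi.single j b)) =
      a * a * N i i + a * b * N i j + a * b * N j i + b * b * N j j := by
  simp [Matrix.mulVec_add, dotProduct_add, add_dotProduct,
    Matrix.mulVec_single]
  ring

/-- Entry bound for real positive semidefinite matrices. -/
lemma psd_entry_le {n : ℕ} {N : Matrix (Fin n) (Fin n) ℝ} (hN : N.PosSemidef)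
    (i j : Fin n) : |N i j| ≤ (N i i + N j j) / 2 := by
  have hsymm : N j i = N i j := by
    have h := congrFun (congrFun hN.1 i) j
    simpa [Matrix.conjTranspose_apply] using h
  have h1 := hN.dotProduct_mulVec_nonneg (Pi.single i (1:ℝ) + Pi.single j (1:ℝ))
  have h2 := hN.dotProduct_mulVec_nonneg (Pi.single i (1:ℝ) + Pi.single j (-1:ℝ))
  simp only [star_trivial] at h1 h2
  rw [quad_single] at h1 h2
  rw [abs_le]
  constructor <;> nlinarith [h1, h2, hsymm]

/-- Diagonal entries of a PSD matrix are nonnegative. -/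
lemma psd_diag_nonneg {n : ℕ} {N : Matrix (Fin n) (Fin n) ℝ} (hN : N.PosSemidef)
    (i : Fin n) : 0 ≤ N i i := by
  have := hN.dotProduct_mulVec_nonneg (Pi.single i (1:ℝ))
  simpa [Matrix.mulVec_single] using this

/-- Nonnegative scalar multiples of PSD matrices are PSD. -/
lemma psd_smul {n : ℕ} {N : Matrix (Fin n) (Fin n) ℝ} (hN : N.PosSemidef) {c : ℝ}
    (hc : 0 ≤ c) : (c • N).PosSemidef := by
  refine Matrix.PosSemidef.of_dotProduct_mulVec_nonneg ?_ ?_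
  · have hT : Nᵀ = N := by simpa using hN.1.eq
    rw [Matrix.IsHermitian, Matrix.conjTranspose_smul]
    simp [hT]
  · intro x
    rw [Matrix.smul_mulVec, dotProduct_smul, smul_eq_mul]
    exact mul_nonneg hc (hN.dotProduct_mulVec_nonneg x)

/-- Tikhonov regularization: (AᵀA + εI)⁻¹Aᵀ → A⁺ as ε → 0⁺, with AᵀA + εI invertible
for all ε > 0 (even when AᵀA is not invertible). -/
theorem tikhonov_limit (m n : ℕ) (A : Matrix (Fin m) (Fin n) ℝ)
    (Ap : Matrix (Fin n) (Fin m) ℝ) (hAp : IsMoorePenrose A Ap) :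
    (∀ ε : ℝ, 0 < ε → IsUnit (Aᵀ * A + ε • (1 : Matrix (Fin n) (Fin n) ℝ))) ∧
    Tendsto (fun ε : ℝ => (Aᵀ * A + ε • (1 : Matrix (Fin n) (Fin n) ℝ))⁻¹ * Aᵀ)
      (nhdsWithin 0 (Set.Ioi 0)) (nhds Ap) := by
  obtain ⟨h1, h2, h3, h4⟩ := hAp
  set B : Matrix (Fin n) (Fin n) ℝ := Aᵀ * A with hBdef
  have hBsd : B.PosSemidef := by
    have := Matrix.posSemidef_conjTranspose_mul_self A
    simpa [hBdef] using this
  have hPD : ∀ ε : ℝ, 0 < ε → (B + ε • (1 : Matrix (Fin n) (Fin n) ℝ)).PosDef := by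
    intro ε hε
    refine Matrix.PosDef.posSemidef_add hBsd ?_
    rw [Matrix.smul_one_eq_diagonal]
    exact Matrix.PosDef.diagonal (fun _ => hε)
  refine ⟨fun ε hε => (hPD ε hε).isUnit, ?_⟩
  -- key algebraic identities
  have hAt : B * Ap = Aᵀ := by
    have : B * Ap = (A * Ap * A)ᵀ := by
      rw [hBdef, Matrix.mul_assoc]
      conv_lhs => rw [← h3]
      exact (Matrix.transpose_mul (A * Ap) A).symm
    rw [this, h1]
  set C : Matrix (Fin n) (Fin m) ℝ := Ap * Apᵀ * Ap with hCdef
  have hApC : B * C = Ap := by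
    have step : Ap = Aᵀ * Apᵀ * Ap := by
      conv_lhs => rw [← h2]
      rw [← h4, Matrix.transpose_mul]
    calc B * C = B * Ap * Apᵀ * Ap := by
          rw [hCdef, ← Matrix.mul_assoc, ← Matrix.mul_assoc]
    _ = Aᵀ * Apᵀ * Ap := by rw [hAt]
    _ = Ap := step.symm
  -- the main formula for ε > 0
  have key : ∀ ε : ℝ, 0 < ε →
      (B + ε • (1 : Matrix (Fin n) (Fin n) ℝ))⁻¹ * Aᵀ =
        Ap - ε • C + (ε * ε) • ((B + ε • (1 : Matrix (Fin n) (Fin n) ℝ))⁻¹ * C) := by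
    intro ε hε
    set M : Matrix (Fin n) (Fin n) ℝ := B + ε • 1 with hMdef
    have hU : IsUnit M.det := (Matrix.isUnit_iff_isUnit_det M).1 (hPD ε hε).isUnit
    have hMX : M * (Ap - ε • C + (ε * ε) • (M⁻¹ * C)) = Aᵀ := by
      have hMC : M * (M⁻¹ * C) = C := by
        rw [← Matrix.mul_assoc, Matrix.mul_nonsing_inv M hU, Matrix.one_mul]
      rw [Matrix.mul_add, Matrix.mul_sub, Matrix.mul_smul, Matrix.mul_smul, hMC]
      rw [hMdef, Matrix.add_mul, Matrix.add_mul, Matrix.smul_mul, Matrix.smul_mul,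
        Matrix.one_mul, Matrix.one_mul, hAt, hApC]
      rw [smul_add, smul_smul]
      abel
    calc M⁻¹ * Aᵀ = M⁻¹ * (M * (Ap - ε • C + (ε * ε) • (M⁻¹ * C))) := by rw [hMX]
    _ = _ := by rw [← Matrix.mul_assoc, Matrix.nonsing_inv_mul M hU, Matrix.one_mul]
  -- entrywise bound on the inverse
  have inv_bound : ∀ ε : ℝ, 0 < ε → ∀ i j : Fin n,
      |(B + ε • (1 : Matrix (Fin n) (Fin n) ℝ))⁻¹ i j| ≤ 1 / ε := by
    intro ε hε i j
    set M : Matrix (Fin n) (Fin n) ℝ := B + ε • 1 with hMdef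
    have hU : IsUnit M.det := (Matrix.isUnit_iff_isUnit_det M).1 (hPD ε hε).isUnit
    have hMinvPD : (M⁻¹).PosDef := (hPD ε hε).inv
    have hMinvH : (M⁻¹)ᴴ = M⁻¹ := hMinvPD.1
    -- Q = (1/ε)•1 - M⁻¹ is PSD
    have hQpsd : ((1/ε) • (1 : Matrix (Fin n) (Fin n) ℝ) - M⁻¹).PosSemidef := by
      have hBB : (B * B + ε • B).PosSemidef := by
        have hBBpsd : (B * B).PosSemidef := by
          have := Matrix.posSemidef_conjTranspose_mul_self B
          have hBH : Bᴴ = B := hBsd.1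
          rwa [hBH] at this
        exact hBBpsd.add (psd_smul hBsd hε.le)
      have hcong : (M⁻¹ * (B * B + ε • B) * (M⁻¹)ᴴ).PosSemidef :=
        hBB.mul_mul_conjTranspose_same M⁻¹
      rw [hMinvH] at hcong
      have hEq : (1/ε) • (M⁻¹ * (B * B + ε • B) * M⁻¹) =
          (1/ε) • (1 : Matrix (Fin n) (Fin n) ℝ) - M⁻¹ := by
        have h5 : B * B + ε • B = B * M := by
          rw [hMdef, Matrix.mul_add, Matrix.mul_smul, Matrix.mul_one]
        have h6 : M⁻¹ * (B * M) * M⁻¹ = M⁻¹ * B := by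
          rw [Matrix.mul_assoc, Matrix.mul_assoc, Matrix.mul_nonsing_inv M hU,
            Matrix.mul_one]
        have h7 : M⁻¹ * B = 1 - ε • M⁻¹ := by
          have hBM : B = M - ε • 1 := by rw [hMdef]; abel
          rw [hBM, Matrix.mul_sub, Matrix.nonsing_inv_mul M hU, Matrix.mul_smul,
            Matrix.mul_one]
        rw [h5, h6, h7, smul_sub, smul_smul, one_div, inv_mul_cancel₀ hε.ne', one_smul]
      rw [← hEq]
      exact psd_smul hcong (by positivity)
    have hdiag : ∀ k : Fin n, M⁻¹ k k ≤ 1 / ε := by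
      intro k
      have hq := psd_diag_nonneg hQpsd k
      have h1e : ((1/ε) • (1 : Matrix (Fin n) (Fin n) ℝ) - M⁻¹) k k
          = 1/ε - M⁻¹ k k := by simp [Matrix.one_apply]
      rw [h1e] at hq; linarith
    have hent := psd_entry_le hMinvPD.posSemidef i j
    have hii := hdiag i
    have hjj := hdiag j
    linarith
  -- pass to the limit entrywise
  refine tendsto_pi_nhds.2 fun i => tendsto_pi_nhds.2 fun j => ?_
  have hb : Tendsto (fun ε : ℝ =>
      ((B + ε • (1 : Matrix (Fin n) (Fin n) ℝ))⁻¹ * Aᵀ) i j - Ap i j)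
      (nhdsWithin 0 (Set.Ioi 0)) (nhds 0) := by
    set K : ℝ := |C i j| + ∑ k : Fin n, |C k j| with hK
    apply squeeze_zero_norm' (a := fun ε : ℝ => ε * K)
    · filter_upwards [self_mem_nhdsWithin] with ε hε
      have hε' : (0:ℝ) < ε := hε
      rw [key ε hε']
      have hbound : |(ε * ε) * ((B + ε • (1 : Matrix (Fin n) (Fin n) ℝ))⁻¹ * C) i j|
          ≤ ε * ∑ k : Fin n, |C k j| := by
        have hsum : |((B + ε • (1 : Matrix (Fin n) (Fin n) ℝ))⁻¹ * C) i j|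
            ≤ (1/ε) * ∑ k : Fin n, |C k j| := by
          rw [Matrix.mul_apply, Finset.mul_sum]
          refine (Finset.abs_sum_le_sum_abs _ _).trans ?_
          refine Finset.sum_le_sum fun k _ => ?_
          rw [abs_mul]
          exact mul_le_mul_of_nonneg_right (inv_bound ε hε' i k) (abs_nonneg _)
        calc |(ε * ε) * ((B + ε • (1 : Matrix (Fin n) (Fin n) ℝ))⁻¹ * C) i j|
            = (ε * ε) * |((B + ε • (1 : Matrix (Fin n) (Fin n) ℝ))⁻¹ * C) i j| := by
              rw [abs_mul, abs_of_nonneg (mul_nonneg hε'.le hε'.le)]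
          _ ≤ (ε * ε) * ((1/ε) * ∑ k : Fin n, |C k j|) :=
              mul_le_mul_of_nonneg_left hsum (mul_nonneg hε'.le hε'.le)
          _ = ε * ∑ k : Fin n, |C k j| := by field_simp
      have hexp : (Ap - ε • C + (ε * ε) • ((B + ε • (1 : Matrix (Fin n) (Fin n) ℝ))⁻¹ * C)) i j - Ap i j
          = -(ε * C i j) + (ε * ε) * ((B + ε • (1 : Matrix (Fin n) (Fin n) ℝ))⁻¹ * C) i j := by
        simp only [Matrix.add_apply, Matrix.sub_apply, Matrix.smul_apply, smul_eq_mul]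
        ring
      rw [hexp]
      calc ‖-(ε * C i j) + (ε * ε) * ((B + ε • (1 : Matrix (Fin n) (Fin n) ℝ))⁻¹ * C) i j‖
          ≤ |(ε * C i j)| + |(ε * ε) * ((B + ε • (1 : Matrix (Fin n) (Fin n) ℝ))⁻¹ * C) i j| := by
            rw [Real.norm_eq_abs]
            exact (abs_add_le _ _).trans (by rw [abs_neg])
        _ ≤ ε * |C i j| + ε * ∑ k : Fin n, |C k j| := by
            rw [abs_mul, abs_of_nonneg hε'.le]
            exact add_le_add le_rfl hbound
        _ = ε * K := by rw [hK]; ring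
    · have hg : Tendsto (fun ε : ℝ => ε * K) (nhds 0) (nhds 0) := by
        simpa using (tendsto_id.mul_const K : Tendsto (fun ε : ℝ => ε * K) (nhds (0:ℝ)) (nhds (0 * K)))
      exact hg.mono_left nhdsWithin_le_nhds
  have hfin := hb.add_const (Ap i j)
  simpa using hfin
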